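/- Let F be a graph on k ≥ 1 vertices and let n ≥ k + 1. Then there exists a connected graph G on n vertices such that ι(G, F) = ⌊n/(k+1)⌋, where ι(G, F) is the size of a smallest {F}-isolating set of G. (The paper's witness is the graph B_{n,F} obtained by taking a path on b = n − k⌊n/(k+1)⌋ vertices, attaching extra pendant-like path vertices to its last vertex if b exceeds a = ⌊n/(k+1)⌋, together with a vertex-disjoint copies F₁, …, F_a of F, and joining the i-th vertex of the path to every vertex of F_i for each i ∈ [a].) -/

import Mathlib

open SimpleGraph

/-- The closed neighbourhood `N[D]` of a set `D` of vertices of `G`. -/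
def closedNbhd {V : Type*} (G : SimpleGraph V) (D : Set V) : Set V :=
  D ∪ ⋃ u ∈ D, G.neighborSet u

/-- `G` contains a subgraph isomorphic to `F`, i.e. there is an injective
graph homomorphism from `F` to `G`. -/
def ContainsCopy {V W : Type*} (G : SimpleGraph V) (F : SimpleGraph W) : Prop :=
  ∃ f : F →g G, Function.Injective f

/-- `D` is an `ℱ`-isolating set of `G` (for the family `𝓕 i, i : ι`):
`G − N[D]` contains no subgraph isomorphic to a member of the family. -/
def IsIsolating {V ι : Type*} {W : ι → Type*} (G : SimpleGraph V)
    (𝓕 : ∀ i, SimpleGraph (W i)) (D : Set V) : Prop :=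
  ∀ i, ¬ ContainsCopy (G.induce (closedNbhd G D)ᶜ) (𝓕 i)

/-- `ι(G, ℱ)`: the size of a smallest `ℱ`-isolating set of `G`. -/
noncomputable def iotaFam {V ι : Type*} {W : ι → Type*} (G : SimpleGraph V)
    (𝓕 : ∀ i, SimpleGraph (W i)) : ℕ :=
  sInf {k | ∃ D : Set V, IsIsolating G 𝓕 D ∧ D.ncard = k}

/-- `ι(G, F)`: the size of a smallest `{F}`-isolating set of `G`. -/
noncomputable def iotaF {V W : Type*} (G : SimpleGraph V) (F : SimpleGraph W) : ℕ :=
  iotaFam G (fun _ : Unit => F)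

/-! ### Transport along an equivalence of vertex types -/

section Transport

variable {V1 V2 : Type*} (e : V1 ≃ V2)

lemma closedNbhd_comap (G : SimpleGraph V2) (D : Set V2) :
    closedNbhd (G.comap e) (e ⁻¹' D) = e ⁻¹' closedNbhd G D := by
  ext v
  simp only [closedNbhd, Set.mem_union, Set.mem_preimage, Set.mem_iUnion,
    mem_neighborSet, comap_adj]
  constructor
  · rintro (h | ⟨u, hu, hadj⟩)
    · exact Or.inl h
    · exact Or.inr ⟨e u, hu, hadj⟩
  · rintro (h | ⟨u, hu, hadj⟩)
    · exact Or.inl h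
    · exact Or.inr ⟨e.symm u, by simpa using hu, by simpa using hadj⟩

lemma containsCopy_iff_of_iso {A B X : Type*} {G : SimpleGraph A} {G' : SimpleGraph B}
    (φ : G ≃g G') (F : SimpleGraph X) : ContainsCopy G F ↔ ContainsCopy G' F := by
  constructor
  · rintro ⟨f, hf⟩
    exact ⟨φ.toHom.comp f, (Equiv.injective φ.toEquiv).comp hf⟩
  · rintro ⟨f, hf⟩
    exact ⟨φ.symm.toHom.comp f, (Equiv.injective φ.symm.toEquiv).comp hf⟩

/-- The induced subgraph of a comap on the preimage is isomorphic to the induced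
subgraph on the original set. -/
def induceComapIso (G : SimpleGraph V2) (S : Set V2) :
    (G.comap e).induce (e ⁻¹' S) ≃g G.induce S where
  toEquiv := e.subtypeEquiv (fun _ => Iff.rfl)
  map_rel_iff' := Iff.rfl

lemma isIsolating_comap_iff {ι : Type*} {X : ι → Type*} (G : SimpleGraph V2)
    (𝓕 : ∀ i, SimpleGraph (X i)) (D : Set V2) :
    IsIsolating (G.comap e) 𝓕 (e ⁻¹' D) ↔ IsIsolating G 𝓕 D := by
  unfold IsIsolating
  have hset : (closedNbhd (G.comap e) (e ⁻¹' D))ᶜ = e ⁻¹' (closedNbhd G D)ᶜ := by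
    rw [closedNbhd_comap]; rfl
  refine forall_congr' fun i => not_congr ?_
  rw [hset]
  exact containsCopy_iff_of_iso (induceComapIso e G (closedNbhd G D)ᶜ) (𝓕 i)

lemma iotaFam_comap {ι : Type*} {X : ι → Type*} (G : SimpleGraph V2)
    (𝓕 : ∀ i, SimpleGraph (X i)) :
    iotaFam (G.comap e) 𝓕 = iotaFam G 𝓕 := by
  unfold iotaFam
  congr 1
  ext m
  constructor
  · rintro ⟨D, hD, rfl⟩
    refine ⟨e '' D, ?_, ?_⟩
    · have : e ⁻¹' (e '' D) = D := by simp
      rw [← isIsolating_comap_iff e, this]; exact hD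
    · rw [Set.ncard_image_of_injective _ e.injective]
  · rintro ⟨D, hD, rfl⟩
    refine ⟨e ⁻¹' D, (isIsolating_comap_iff e G 𝓕 D).2 hD, ?_⟩
    rw [← Set.ncard_image_of_injective (⇑e ⁻¹' D) e.injective,
      Set.image_preimage_eq _ e.surjective]

end Transport

/-! ### The construction -/

section Construction

variable {W : Type*} (F : SimpleGraph W) (a r : ℕ)

/-- Vertex type: for each `i : Fin a`, a centre `(i, none)` together with a copy
`(i, some w)` of `F`; plus `r` extra vertices. -/
abbrev BV (W : Type*) (a r : ℕ) : Type _ := (Fin a × Option W) ⊕ Fin r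

/-- Adjacency: centres form a path, centre `i` is joined to all of copy `i`,
copy `i` carries the edges of `F`, and all extra vertices are pendant at centre `0`. -/
def Badj : BV W a r → BV W a r → Prop
  | .inl (i, none), .inl (j, none) => i.val + 1 = j.val ∨ j.val + 1 = i.val
  | .inl (i, none), .inl (j, some _) => i = j
  | .inl (i, some _), .inl (j, none) => i = j
  | .inl (i, some w), .inl (j, some w') => i = j ∧ F.Adj w w'
  | .inl (i, none), .inr _ => i.val = 0
  | .inr _, .inl (i, none) => i.val = 0
  | _, _ => False

/-- The graph `B_{n,F}`. -/
def BG : SimpleGraph (BV W a r) where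
  Adj := Badj F a r
  symm := by
    constructor
    rintro (⟨i, (_ | w)⟩ | x) (⟨j, (_ | w')⟩ | y) h <;>
      simp only [Badj] at h ⊢ <;> tauto
  loopless := by
    constructor
    rintro (⟨i, (_ | w)⟩ | x) h <;> simp only [Badj] at h
    · omega
    · exact F.loopless.irrefl w h.2

lemma BG_adj (u v : BV W a r) : (BG F a r).Adj u v ↔ Badj F a r u v := Iff.rfl

lemma BG_connected (ha : 0 < a) : (BG F a r).Connected := by
  rw [connected_iff]
  refine ⟨?_, ⟨.inl (⟨0, ha⟩, none)⟩⟩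
  -- every vertex is reachable from the centre 0
  have hcen : ∀ i : Fin a,
      (BG F a r).Reachable (.inl (⟨0, ha⟩, none)) (.inl (i, none)) := by
    intro i
    obtain ⟨m, hm⟩ := i
    induction m with
    | zero => exact Reachable.refl _
    | succ p ih =>
      have hp : p < a := Nat.lt_of_succ_lt hm
      have hadj : (BG F a r).Adj (.inl (⟨p, hp⟩, none)) (.inl (⟨p + 1, hm⟩, none)) := by
        rw [BG_adj]
        simp [Badj]
      exact (ih hp).trans hadj.reachable
  have hall : ∀ v : BV W a r, (BG F a r).Reachable (.inl (⟨0, ha⟩, none)) v := by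
    rintro (⟨i, (_ | w)⟩ | x)
    · exact hcen i
    · have hadj : (BG F a r).Adj (.inl (i, none)) (.inl (i, some w)) := by
        rw [BG_adj]
        simp only [Badj]
      exact (hcen i).trans hadj.reachable
    · have hadj : (BG F a r).Adj (.inl (⟨0, ha⟩, none)) (.inr x) := by
        rw [BG_adj]
        simp only [Badj]
      exact hadj.reachable
  exact fun u v => (hall u).symm.trans (hall v)

/-- The set of centres. -/
def centres : Set (BV W a r) := Set.range (fun i : Fin a => Sum.inl (i, none))

lemma centres_isolating [Nonempty W] (ha : 0 < a) {ι : Type*}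
    (𝓕 : ∀ _ : ι, SimpleGraph W) :
    IsIsolating (BG F a r) 𝓕 (centres a r) := by
  have hfull : closedNbhd (BG F a r) (centres a r) = Set.univ := by
    rw [Set.eq_univ_iff_forall]
    rintro (⟨i, (_ | w)⟩ | x)
    · exact Or.inl ⟨i, rfl⟩
    · have hadj : (BG F a r).Adj (.inl (i, none)) (.inl (i, some w)) := by
        rw [BG_adj]
        simp only [Badj]
      exact Or.inr (Set.mem_iUnion.2 ⟨.inl (i, none), Set.mem_iUnion.2 ⟨⟨i, rfl⟩, hadj⟩⟩)
    · have hadj : (BG F a r).Adj (.inl (⟨0, ha⟩, none)) (.inr x) := by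
        rw [BG_adj]
        simp only [Badj]
      exact Or.inr (Set.mem_iUnion.2 ⟨.inl (⟨0, ha⟩, none),
        Set.mem_iUnion.2 ⟨⟨⟨0, ha⟩, rfl⟩, hadj⟩⟩)
  intro i ⟨f, _⟩
  exact (f (Classical.arbitrary W)).2 (Set.eq_univ_iff_forall.mp hfull _)

lemma centres_ncard : (centres (W := W) a r).ncard = a := by
  have hinj : Function.Injective (fun i : Fin a => (Sum.inl (i, none) : BV W a r)) := by
    intro i j hij
    simpa using hij
  rw [centres, ← Set.image_univ, Set.ncard_image_of_injective _ hinj, Set.ncard_univ,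
    Nat.card_eq_fintype_card, Fintype.card_fin]

lemma isolating_lower_bound [Fintype W] (D : Set (BV W a r))
    (hD : IsIsolating (BG F a r) (fun _ : Unit => F) D) : a ≤ D.ncard := by
  by_contra hlt
  push_neg at hlt
  -- find an index whose block is disjoint from D
  have hexists : ∃ i : Fin a, ∀ x : Option W, Sum.inl (i, x) ∉ D := by
    by_contra hno
    push_neg at hno
    choose x hx using hno
    classical
    have hinj : Function.Injective (fun i : Fin a => (⟨Sum.inl (i, x i), hx i⟩ : D)) := by
      intro i j hij
      have h2 := congrArg (fun z : D => (z : BV W a r)) hij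
      simp only [Sum.inl.injEq, Prod.mk.injEq] at h2
      exact h2.1
    have hle : a ≤ Fintype.card D := by
      simpa using Fintype.card_le_of_injective _ hinj
    rw [← Nat.card_coe_set_eq, Nat.card_eq_fintype_card] at hlt
    omega
  obtain ⟨i, hi⟩ := hexists
  apply hD ()
  -- the `i`-th copy of `F` is untouched
  have hmem : ∀ w : W, (Sum.inl (i, some w) : BV W a r) ∈ (closedNbhd (BG F a r) D)ᶜ := by
    intro w
    intro hmem
    rcases hmem with h | h
    · exact hi _ h
    · rw [Set.mem_iUnion] at h
      obtain ⟨u, hu⟩ := h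
      rw [Set.mem_iUnion] at hu
      obtain ⟨huD, hadj⟩ := hu
      have hadj' : Badj F a r u (Sum.inl (i, some w)) := hadj
      rcases u with (⟨j, (_ | w')⟩ | x) <;> simp only [Badj] at hadj'
      · exact hi none (hadj' ▸ huD)
      · exact hi (some w') (hadj'.1 ▸ huD)
  refine ⟨⟨fun w => ⟨Sum.inl (i, some w), hmem w⟩, ?_⟩, ?_⟩
  · intro w w' hadj
    rw [comap_adj, BG_adj]
    simp only [Badj]
    exact ⟨rfl, hadj⟩
  · intro w w' h
    have h2 : (Sum.inl (i, some w) : BV W a r) = Sum.inl (i, some w') :=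
      congrArg Subtype.val h
    simp only [Sum.inl.injEq, Prod.mk.injEq, Option.some.injEq] at h2
    exact h2.2

end Construction

/-- Let `F` be a graph on `k ≥ 1` vertices and let `n ≥ k + 1`. Then there exists a
connected graph `G` on `n` vertices such that `ι(G, F) = ⌊n/(k+1)⌋`. -/
theorem stmt3 {W : Type*} [Fintype W] (F : SimpleGraph W) (k n : ℕ)
    (hk : 1 ≤ k) (hcard : Fintype.card W = k) (hn : k + 1 ≤ n) :
    ∃ G : SimpleGraph (Fin n), G.Connected ∧ iotaF G F = n / (k + 1) := by
  classical
  have hW : Nonempty W := by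
    rw [← Fintype.card_pos_iff, hcard]; omega
  set a := n / (k + 1) with ha_def
  set r := n % (k + 1) with hr_def
  have ha : 0 < a := Nat.div_pos hn (by omega)
  have hcardBV : Fintype.card (BV W a r) = n := by
    have hdm := Nat.div_add_mod n (k + 1)
    rw [← ha_def, ← hr_def] at hdm
    have h2 : Fintype.card (BV W a r) = a * (k + 1) + r := by
      simp [Fintype.card_sum, Fintype.card_prod, Fintype.card_option, hcard]
    rw [h2, mul_comm]
    exact hdm
  have e : Fin n ≃ BV W a r :=
    Fintype.equivOfCardEq (by rw [Fintype.card_fin, hcardBV])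
  refine ⟨(BG F a r).comap e, ?_, ?_⟩
  · exact (Iso.connected_iff (Iso.comap e (BG F a r))).2 (BG_connected F a r ha)
  · rw [iotaF, iotaFam_comap]
    apply le_antisymm
    · apply Nat.sInf_le
      exact ⟨centres a r, centres_isolating F a r ha _, centres_ncard a r⟩
    · have hne : {m | ∃ D : Set (BV W a r),
          IsIsolating (BG F a r) (fun _ : Unit => F) D ∧ D.ncard = m}.Nonempty :=
        ⟨a, centres a r, centres_isolating F a r ha _, centres_ncard a r⟩
      refine le_csInf hne ?_
      rintro m ⟨D, hD, rfl⟩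
      exact isolating_lower_bound F a r D hD
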